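/- Under conditional consistency and conditional ignorability, with a nonnegative discrete outcome, the weighted sum of conditional probabilities of causation dominates the difference of conditional means: Σ_{y ∈ L} y · P(Y₀ ≠ y and Y₁ = y) ≥ E[Y | Z = z, W = w] − E[Y | Z ≠ z, W = w]. -/

import Mathlib

open MeasureTheory ProbabilityTheory

lemma integral_eq_sum_finset_aux {Ω : Type*} [MeasurableSpace Ω]
    (ν : Measure Ω) [IsFiniteMeasure ν] (L : Finset ℝ) (Y : Ω → ℝ)
    (hYm : Measurable Y) (hYL : ∀ ω, Y ω ∈ L) :
    ∫ ω, Y ω ∂ν = ∑ y ∈ L, y * (ν {ω | Y ω = y}).toReal := by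
  have hrep : ∀ ω, Y ω = ∑ y ∈ L, Set.indicator {ω' | Y ω' = y} (fun _ => y) ω := by
    intro ω
    have : ∀ y ∈ L, Set.indicator {ω' | Y ω' = y} (fun _ => y) ω
        = if Y ω = y then y else 0 := by
      intro y _
      simp [Set.indicator_apply, Set.mem_setOf_eq]
    rw [Finset.sum_congr rfl this, Finset.sum_ite_eq L (Y ω) (fun y => y)]
    simp [hYL ω]
  have hms : ∀ y : ℝ, MeasurableSet {ω' | Y ω' = y} := fun y =>
    hYm (measurableSet_singleton y)
  calc ∫ ω, Y ω ∂ν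
      = ∫ ω, ∑ y ∈ L, Set.indicator {ω' | Y ω' = y} (fun _ => y) ω ∂ν := by
        exact integral_congr_ae (Filter.Eventually.of_forall hrep)
    _ = ∑ y ∈ L, ∫ ω, Set.indicator {ω' | Y ω' = y} (fun _ => y) ω ∂ν := by
        refine integral_finset_sum _ (fun y _ => ?_)
        exact (integrable_const y).indicator (hms y)
    _ = ∑ y ∈ L, y * (ν {ω | Y ω = y}).toReal := by
        refine Finset.sum_congr rfl (fun y _ => ?_)
        rw [integral_indicator_const y (hms y)]
        simp [mul_comm, measureReal_def]

theorem cpoc_weighted_sum_ge_conditional_mean_difference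
    {Ω 𝒵 𝒲 : Type*} [MeasurableSpace Ω]
    (μ : Measure Ω) [IsProbabilityMeasure μ]
    (L : Finset ℝ) (hL : ∀ x ∈ L, 0 ≤ x)
    (Z : Ω → 𝒵) (z : 𝒵) (W : Ω → 𝒲) (w : 𝒲)
    (Y Y1 Y0 : Ω → ℝ)
    (hYm : Measurable Y) (hY1m : Measurable Y1) (hY0m : Measurable Y0)
    (hYL : ∀ ω, Y ω ∈ L) (hY1L : ∀ ω, Y1 ω ∈ L) (hY0L : ∀ ω, Y0 ω ∈ L)
    (hmE1 : MeasurableSet {ω | Z ω = z ∧ W ω = w})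
    (hmE0 : MeasurableSet {ω | Z ω ≠ z ∧ W ω = w})
    (hpos1 : 0 < μ {ω | Z ω = z ∧ W ω = w})
    (hpos0 : 0 < μ {ω | Z ω ≠ z ∧ W ω = w})
    (hcons1 : ∀ ω, Z ω = z ∧ W ω = w → Y ω = Y1 ω)
    (hcons0 : ∀ ω, Z ω ≠ z ∧ W ω = w → Y ω = Y0 ω)
    (hind1 : ∀ y' ∈ L,
      μ ({ω | Y1 ω = y'} ∩ {ω | Z ω = z ∧ W ω = w})
        = μ {ω | Y1 ω = y'} * μ {ω | Z ω = z ∧ W ω = w})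
    (hind0 : ∀ y' ∈ L,
      μ ({ω | Y0 ω = y'} ∩ {ω | Z ω ≠ z ∧ W ω = w})
        = μ {ω | Y0 ω = y'} * μ {ω | Z ω ≠ z ∧ W ω = w}) :
    (∫ ω, Y ω ∂(μ[|{ω | Z ω = z ∧ W ω = w}]))
      - (∫ ω, Y ω ∂(μ[|{ω | Z ω ≠ z ∧ W ω = w}]))
      ≤ ∑ y ∈ L, y * (μ {ω | Y0 ω ≠ y ∧ Y1 ω = y}).toReal := by
  set E1 := {ω | Z ω = z ∧ W ω = w} with hE1
  set E0 := {ω | Z ω ≠ z ∧ W ω = w} with hE0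
  have hne1 : μ E1 ≠ 0 := hpos1.ne'
  have hne0 : μ E0 ≠ 0 := hpos0.ne'
  have hfin1 : μ E1 ≠ ⊤ := measure_ne_top μ E1
  have hfin0 : μ E0 ≠ ⊤ := measure_ne_top μ E0
  haveI : IsProbabilityMeasure (μ[|E1]) := cond_isProbabilityMeasure hne1
  haveI : IsProbabilityMeasure (μ[|E0]) := cond_isProbabilityMeasure hne0
  have hc1 : ∀ y ∈ L, (μ[|E1]) {ω | Y ω = y} = μ {ω | Y1 ω = y} := by
    intro y hy
    rw [cond_apply hmE1]
    have hset : E1 ∩ {ω | Y ω = y} = {ω | Y1 ω = y} ∩ E1 := by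
      ext ω
      constructor
      · rintro ⟨h1, h2⟩
        exact ⟨by rw [Set.mem_setOf_eq, ← hcons1 ω h1]; exact h2, h1⟩
      · rintro ⟨h2, h1⟩
        exact ⟨h1, by rw [Set.mem_setOf_eq, hcons1 ω h1]; exact h2⟩
    rw [hset, hind1 y hy, mul_comm (μ {ω | Y1 ω = y}) (μ E1), ← mul_assoc,
      ENNReal.inv_mul_cancel hne1 hfin1, one_mul]
  have hc0 : ∀ y ∈ L, (μ[|E0]) {ω | Y ω = y} = μ {ω | Y0 ω = y} := by
    intro y hy
    rw [cond_apply hmE0]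
    have hset : E0 ∩ {ω | Y ω = y} = {ω | Y0 ω = y} ∩ E0 := by
      ext ω
      constructor
      · rintro ⟨h1, h2⟩
        exact ⟨by rw [Set.mem_setOf_eq, ← hcons0 ω h1]; exact h2, h1⟩
      · rintro ⟨h2, h1⟩
        exact ⟨h1, by rw [Set.mem_setOf_eq, hcons0 ω h1]; exact h2⟩
    rw [hset, hind0 y hy, mul_comm (μ {ω | Y0 ω = y}) (μ E0), ← mul_assoc,
      ENNReal.inv_mul_cancel hne0 hfin0, one_mul]
  have hs1 : ∑ y ∈ L, y * ((μ[|E1]) {ω | Y ω = y}).toReal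
      = ∑ y ∈ L, y * (μ {ω | Y1 ω = y}).toReal :=
    Finset.sum_congr rfl (fun y hy => by rw [hc1 y hy])
  have hs0 : ∑ y ∈ L, y * ((μ[|E0]) {ω | Y ω = y}).toReal
      = ∑ y ∈ L, y * (μ {ω | Y0 ω = y}).toReal :=
    Finset.sum_congr rfl (fun y hy => by rw [hc0 y hy])
  rw [integral_eq_sum_finset_aux (μ[|E1]) L Y hYm hYL,
    integral_eq_sum_finset_aux (μ[|E0]) L Y hYm hYL, hs1, hs0,
    ← Finset.sum_sub_distrib]
  refine Finset.sum_le_sum (fun y hy => ?_)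
  rw [← mul_sub]
  refine mul_le_mul_of_nonneg_left ?_ (hL y hy)
  have hmono : μ {ω | Y1 ω = y} ≤ μ {ω | Y0 ω ≠ y ∧ Y1 ω = y} + μ {ω | Y0 ω = y} := by
    refine le_trans (measure_mono ?_) (measure_union_le _ _)
    intro ω hω
    by_cases h : Y0 ω = y
    · exact Or.inr h
    · exact Or.inl ⟨h, hω⟩
  have := ENNReal.toReal_mono (by finiteness) hmono
  rw [ENNReal.toReal_add (measure_ne_top _ _) (measure_ne_top _ _)] at this
  linarith
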